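/- Let d ≥ 2 and let S, T ⊆ Z_d with |S| + |T| ≤ d. Define H(S,T) as the set of ψ ∈ C^d whose standard-basis support is contained in S and whose Fourier support is contained in T. If d is prime, then H(S,T) = {0}. -/

import Mathlib

open Complex Finset
open scoped Classical

noncomputable def dftOmega (d : ℕ) : ℂ := Complex.exp (2 * Real.pi * Complex.I / d)

/-- The j-th Fourier basis vector of `ℂ^d`, with i-th entry `ω^{ij}/√d`. -/
noncomputable def fourierVec (d : ℕ) (j : Fin d) : Fin d → ℂ :=
  fun i => dftOmega d ^ ((i : ℕ) * (j : ℕ)) / Real.sqrt d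

/-- The j-th Fourier coefficient `⟨f_j, ψ⟩ = (1/√d)∑_i ω^{−ij} ψ(i)`. -/
noncomputable def dftCoeff (d : ℕ) (ψ : Fin d → ℂ) (j : Fin d) : ℂ :=
  ∑ i, (starRingEnd ℂ) (fourierVec d j i) * ψ i

/-- Number of nonzero standard-basis coordinates of ψ. -/
noncomputable def nA (d : ℕ) (ψ : Fin d → ℂ) : ℕ :=
  (Finset.univ.filter fun i => ψ i ≠ 0).card

/-- Number of nonzero Fourier coefficients of ψ. -/
noncomputable def nB (d : ℕ) (ψ : Fin d → ℂ) : ℕ :=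
  (Finset.univ.filter fun j => dftCoeff d ψ j ≠ 0).card

/-- Kirkwood-Dirac distribution `Q_{ij} = ⟨e_i,ψ⟩⟨ψ,f_j⟩⟨f_j,e_i⟩` of ψ with
respect to the standard basis and the Fourier basis. -/
noncomputable def KD (d : ℕ) (ψ : Fin d → ℂ) (i j : Fin d) : ℂ :=
  ψ i * (∑ k, (starRingEnd ℂ) (ψ k) * fourierVec d j k) * (starRingEnd ℂ) (fourierVec d j i)

section Aux

open Polynomial

lemma sum_range_card_le (s : Finset ℕ) : ∑ i ∈ Finset.range s.card, i ≤ ∑ x ∈ s, x := by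
  obtain ⟨n, hn⟩ : ∃ n, s.card = n := ⟨_, rfl⟩
  induction n generalizing s with
  | zero => simp [Finset.card_eq_zero.mp hn]
  | succ n ih =>
    have hne : s.Nonempty := Finset.card_pos.mp (by omega)
    set m := s.max' hne with hm
    have hmem : m ∈ s := s.max'_mem hne
    have hnm : n ≤ m := by
      have hsub : s ⊆ Finset.range (m + 1) := fun x hx =>
        Finset.mem_range.mpr (Nat.lt_succ_of_le (s.le_max' x hx))
      have := Finset.card_le_card hsub
      rw [hn, Finset.card_range] at this
      omega
    have hcard : (s.erase m).card = n := by rw [Finset.card_erase_of_mem hmem, hn]; omega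
    have ihe := ih (s.erase m) hcard
    have hsum : ∑ x ∈ s.erase m, x + m = ∑ x ∈ s, x := Finset.sum_erase_add s _ hmem
    rw [hn, Finset.sum_range_succ]
    rw [hcard] at ihe
    omega

lemma eq_range_of_sum_le (s : Finset ℕ) (h : ∑ x ∈ s, x ≤ ∑ i ∈ Finset.range s.card, i) :
    s = Finset.range s.card := by
  obtain ⟨n, hn⟩ : ∃ n, s.card = n := ⟨_, rfl⟩
  induction n generalizing s with
  | zero => simp [Finset.card_eq_zero.mp hn]
  | succ n ih =>
    have hne : s.Nonempty := Finset.card_pos.mp (by omega)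
    set m := s.max' hne with hm
    have hmem : m ∈ s := s.max'_mem hne
    have hnm : n ≤ m := by
      have hsub : s ⊆ Finset.range (m + 1) := fun x hx =>
        Finset.mem_range.mpr (Nat.lt_succ_of_le (s.le_max' x hx))
      have := Finset.card_le_card hsub
      rw [hn, Finset.card_range] at this
      omega
    have hcard : (s.erase m).card = n := by rw [Finset.card_erase_of_mem hmem, hn]; omega
    have ihle := sum_range_card_le (s.erase m)
    rw [hcard] at ihle
    have hsum : ∑ x ∈ s.erase m, x + m = ∑ x ∈ s, x := Finset.sum_erase_add s _ hmem
    rw [hn] at h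
    rw [Finset.sum_range_succ] at h
    have hmn : m = n := by omega
    have hle : ∑ x ∈ s.erase m, x ≤ ∑ i ∈ Finset.range (s.erase m).card, i := by
      rw [hcard]; omega
    have heq := ih (s.erase m) hle hcard
    rw [hn, Finset.range_add_one]
    rw [← Finset.insert_erase hmem, heq, hcard, hmn]

theorem chebotarev {p : ℕ} (hp : p.Prime) {ζ : ℂ} (hζ : IsPrimitiveRoot ζ p)
    {n : ℕ} (a b : Fin n → Fin p) (ha : Function.Injective a) (hb : Function.Injective b) :
    Matrix.det (Matrix.of fun i j : Fin n => ζ ^ ((a i : ℕ) * (b j : ℕ))) ≠ 0 := by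
  haveI : Fact p.Prime := ⟨hp⟩
  have hnp : n ≤ p := by
    simpa using Fintype.card_le_of_injective a ha
  set K : ℕ := ∑ i ∈ Finset.range n, i with hK
  -- polynomial-level data
  set lam : ℤ[X] := X - 1 with hlam
  set g : Fin n → ℤ[X] := fun i => ∑ m ∈ Finset.range (a i : ℕ), X ^ m with hgdef
  have hg : ∀ i, (X : ℤ[X]) ^ (a i : ℕ) - 1 = lam * g i := by
    intro i
    rw [hlam, hgdef, mul_comm]
    exact (geom_sum_mul (X : ℤ[X]) (a i : ℕ)).symm
  set w : Fin p → (Fin n → ℤ[X]) := fun k j => C (((b j : ℕ).choose (k : ℕ) : ℤ)) with hwdef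
  set coef : Fin n → Fin p → ℤ[X] := fun i k => ((X : ℤ[X]) ^ (a i : ℕ) - 1) ^ (k : ℕ) with hcoefdef
  -- entry expansion
  have hrow : (fun i : Fin n => fun j : Fin n => (X : ℤ[X]) ^ ((a i : ℕ) * (b j : ℕ)))
      = fun i => ∑ k : Fin p, coef i k • w k := by
    funext i j
    have hbj : (b j : ℕ) + 1 ≤ p := (b j).2
    have hcalc : (X : ℤ[X]) ^ ((a i : ℕ) * (b j : ℕ))
        = ∑ k : Fin p, ((X:ℤ[X])^(a i:ℕ) - 1)^(k:ℕ) * (((b j:ℕ).choose (k:ℕ) : ℤ[X])) := by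
      calc (X:ℤ[X]) ^ ((a i:ℕ) * (b j:ℕ))
          = (((X:ℤ[X]) ^ (a i:ℕ) - 1) + 1) ^ (b j : ℕ) := by rw [sub_add_cancel, pow_mul]
        _ = ∑ k ∈ Finset.range ((b j:ℕ) + 1),
              ((X:ℤ[X])^(a i:ℕ) - 1)^k * 1 ^ ((b j:ℕ) - k) * ((b j:ℕ).choose k : ℤ[X]) :=
            add_pow _ _ _
        _ = ∑ k ∈ Finset.range p, ((X:ℤ[X])^(a i:ℕ) - 1)^k * ((b j:ℕ).choose k : ℤ[X]) := by
            rw [← Finset.sum_subset (Finset.range_subset_range.mpr hbj)]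
            · exact Finset.sum_congr rfl fun k _ => by rw [one_pow, mul_one]
            · intro k hk hk2
              have hlt : (b j : ℕ) < k := by
                simp only [Finset.mem_range] at hk hk2
                omega
              simp [Nat.choose_eq_zero_of_lt hlt]
        _ = ∑ k : Fin p, ((X:ℤ[X])^(a i:ℕ) - 1)^(k:ℕ) * (((b j:ℕ).choose (k:ℕ) : ℤ[X])) :=
            (Fin.sum_univ_eq_sum_range _ p).symm
    rw [hcalc, Finset.sum_apply]
    refine Finset.sum_congr rfl fun k _ => ?_
    simp only [Pi.smul_apply, smul_eq_mul, hcoefdef, hwdef]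
    norm_cast
  -- determinant expansion
  set Mp : Matrix (Fin n) (Fin n) ℤ[X] :=
    Matrix.of fun i j : Fin n => (X : ℤ[X]) ^ ((a i : ℕ) * (b j : ℕ)) with hMp
  set WD : (Fin n → Fin p) → ℤ := fun r =>
    Matrix.det (Matrix.of fun i j : Fin n => (((b j : ℕ).choose ((r i : ℕ)) : ℤ))) with hWD
  have hdet : Mp.det = ∑ r : Fin n → Fin p,
      (∏ i, coef i (r i)) * C (WD r) := by
    calc Mp.det
        = (Matrix.detRowAlternating :
            (Fin n → ℤ[X]) [⋀^Fin n]→ₗ[ℤ[X]] ℤ[X]).toMultilinearMap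
            (fun i => ∑ k : Fin p, coef i k • w k) := by
          rw [← hrow]; rfl
      _ = ∑ r : Fin n → Fin p,
            (Matrix.detRowAlternating :
              (Fin n → ℤ[X]) [⋀^Fin n]→ₗ[ℤ[X]] ℤ[X]).toMultilinearMap
              (fun i => coef i (r i) • w (r i)) :=
          MultilinearMap.map_sum _ _
      _ = ∑ r : Fin n → Fin p, (∏ i, coef i (r i)) * C (WD r) := by
          refine Finset.sum_congr rfl fun r _ => ?_
          rw [MultilinearMap.map_smul_univ, smul_eq_mul]
          congr 1
          have h2 : (fun i => w (r i))
              = ((C : ℤ →+* ℤ[X]).mapMatrix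
                  (Matrix.of fun i j : Fin n => (((b j:ℕ).choose (r i : ℕ) : ℤ)))
                  : Matrix (Fin n) (Fin n) ℤ[X]) := rfl
          show Matrix.det (fun i => w (r i)) = _
          rw [h2, ← RingHom.map_det, hWD]
  -- injective terms only
  set I : Finset (Fin n → Fin p) := Finset.univ.filter (fun r => Function.Injective r) with hI
  have hdet2 : Mp.det = ∑ r ∈ I, (∏ i, coef i (r i)) * C (WD r) := by
    rw [hdet, hI]
    rw [Finset.sum_filter_of_ne]
    intro r _ hne
    by_contra hni
    simp only [Function.Injective, not_forall] at hni
    obtain ⟨x, y, hxy, hne2⟩ := hni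
    apply hne
    have : WD r = 0 := by
      rw [hWD]
      refine Matrix.det_zero_of_row_eq hne2 ?_
      funext j
      simp [hxy]
    rw [this, map_zero, mul_zero]
  -- sums of injective functions
  have hsum_ge : ∀ r ∈ I, K ≤ ∑ i, (r i : ℕ) := by
    intro r hr
    have hinj : Function.Injective r := (Finset.mem_filter.mp hr).2
    have hinj2 : Function.Injective (fun i : Fin n => (r i : ℕ)) :=
      fun x y hxy => hinj (Fin.ext hxy)
    have hcard : (Finset.image (fun i : Fin n => (r i : ℕ)) Finset.univ).card = n := by
      rw [Finset.card_image_of_injective _ hinj2, Finset.card_univ, Fintype.card_fin]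
    have hsum : ∑ x ∈ Finset.image (fun i : Fin n => (r i : ℕ)) Finset.univ, x
        = ∑ i, (r i : ℕ) := Finset.sum_image (fun x _ y _ h => hinj2 h)
    have hle := sum_range_card_le (Finset.image (fun i : Fin n => (r i : ℕ)) Finset.univ)
    rw [hcard, hsum] at hle
    exact hle
  have hsum_eq : ∀ r ∈ I, (∑ i, (r i : ℕ)) = K → ∀ i, (r i : ℕ) < n := by
    intro r hr hKeq i
    have hinj : Function.Injective r := (Finset.mem_filter.mp hr).2
    have hinj2 : Function.Injective (fun i : Fin n => (r i : ℕ)) :=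
      fun x y hxy => hinj (Fin.ext hxy)
    have hcard : (Finset.image (fun i : Fin n => (r i : ℕ)) Finset.univ).card = n := by
      rw [Finset.card_image_of_injective _ hinj2, Finset.card_univ, Fintype.card_fin]
    have hsum : ∑ x ∈ Finset.image (fun i : Fin n => (r i : ℕ)) Finset.univ, x
        = ∑ i, (r i : ℕ) := Finset.sum_image (fun x _ y _ h => hinj2 h)
    have hrange := eq_range_of_sum_le (Finset.image (fun i : Fin n => (r i : ℕ)) Finset.univ)
      (by rw [hcard, hsum, hKeq])
    rw [hcard] at hrange
    have hmem : (r i : ℕ) ∈ Finset.image (fun i : Fin n => (r i : ℕ)) Finset.univ :=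
      Finset.mem_image_of_mem _ (Finset.mem_univ i)
    rw [hrange] at hmem
    exact Finset.mem_range.mp hmem
  -- factor out lam^K
  set Q : ℤ[X] := ∑ r ∈ I,
      lam ^ ((∑ i, (r i : ℕ)) - K) * ((∏ i, g i ^ (r i : ℕ)) * C (WD r)) with hQ
  have hfact : Mp.det = lam ^ K * Q := by
    rw [hdet2, hQ, Finset.mul_sum]
    refine Finset.sum_congr rfl fun r hr => ?_
    have hge := hsum_ge r hr
    have hprod : (∏ i, coef i (r i))
        = lam ^ (∑ i, (r i : ℕ)) * ∏ i, g i ^ (r i : ℕ) := by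
      calc (∏ i, coef i (r i)) = ∏ i, (lam * g i) ^ (r i : ℕ) := by
            refine Finset.prod_congr rfl fun i _ => ?_
            rw [hcoefdef]
            simp only
            rw [hg i]
        _ = (∏ i, lam ^ (r i : ℕ)) * ∏ i, g i ^ (r i : ℕ) := by
            rw [← Finset.prod_mul_distrib]
            exact Finset.prod_congr rfl fun i _ => mul_pow _ _ _
        _ = lam ^ (∑ i, (r i : ℕ)) * ∏ i, g i ^ (r i : ℕ) := by
            rw [Finset.prod_pow_eq_pow_sum]
    rw [hprod]
    rw [← mul_assoc, ← mul_assoc, ← pow_add]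
    congr 3
    omega
  -- evaluation mod p of Q at 1 is nonzero
  have hQ1 : ((Q.eval 1 : ℤ) : ZMod p) ≠ 0 := by
    have hgev : ∀ i : Fin n, (g i).eval 1 = ((a i : ℕ) : ℤ) := by
      intro i
      simp [hgdef, Polynomial.eval_finset_sum]
    have hQev : Q.eval 1 = ∑ r ∈ I,
        (if (∑ i, (r i : ℕ)) = K then (1:ℤ) else 0) *
          ((∏ i, ((a i : ℕ) : ℤ) ^ (r i : ℕ)) * WD r) := by
      rw [hQ, Polynomial.eval_finset_sum]
      refine Finset.sum_congr rfl fun r hr => ?_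
      rw [Polynomial.eval_mul, Polynomial.eval_mul, Polynomial.eval_pow, Polynomial.eval_C]
      congr 1
      · have hlam1 : (lam.eval 1) = 0 := by simp [hlam]
        rw [hlam1, zero_pow_eq]
        have hge := hsum_ge r hr
        by_cases h : (∑ i, (r i : ℕ)) = K
        · have h0 : (∑ i, (r i:ℕ)) - K = 0 := by omega
          simp [h, h0]
        · have h0 : (∑ i, (r i:ℕ)) - K ≠ 0 := by omega
          simp [h, h0]
      · congr 1
        rw [Polynomial.eval_prod]
        exact Finset.prod_congr rfl fun i _ => by rw [Polynomial.eval_pow, hgev i]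
    have hQev2 : Q.eval 1 = ∑ r ∈ I.filter (fun r => (∑ i, (r i : ℕ)) = K),
        (∏ i, ((a i:ℕ):ℤ) ^ (r i:ℕ)) * WD r := by
      conv_rhs => rw [Finset.sum_filter]
      rw [hQev]
      refine Finset.sum_congr rfl fun r _ => ?_
      by_cases h : (∑ i, (r i:ℕ)) = K <;> simp [h]
    set jmap : Equiv.Perm (Fin n) → (Fin n → Fin p) := fun σ i => Fin.castLE hnp (σ i) with hjmap
    have hjinj : Function.Injective jmap := by
      intro σ τ h
      ext i
      have h2 := congrArg Fin.val (congrFun h i)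
      simpa [hjmap] using h2
    have himg : I.filter (fun r => (∑ i, (r i : ℕ)) = K) = Finset.image jmap Finset.univ := by
      ext r
      simp only [hI, Finset.mem_filter, Finset.mem_image, Finset.mem_univ, true_and]
      constructor
      · rintro ⟨hinj, hsum⟩
        have hrI : r ∈ I := by rw [hI]; exact Finset.mem_filter.mpr ⟨Finset.mem_univ _, hinj⟩
        have hlt : ∀ i, (r i : ℕ) < n := hsum_eq r hrI hsum
        set σ0 : Fin n → Fin n := fun i => ⟨(r i : ℕ), hlt i⟩ with hσ0
        have hσinj : Function.Injective σ0 := by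
          intro x y hxy
          have hv := congrArg Fin.val hxy
          exact hinj (Fin.ext hv)
        refine ⟨Equiv.ofBijective σ0 (Finite.injective_iff_bijective.mp hσinj), ?_⟩
        funext i
        apply Fin.ext
        rfl
      · rintro ⟨σ, rfl⟩
        constructor
        · intro x y h
          have hv := congrArg Fin.val h
          exact σ.injective (Fin.ext hv)
        · calc ∑ i, ((jmap σ i : Fin p) : ℕ) = ∑ i, ((σ i : ℕ)) := rfl
            _ = ∑ i : Fin n, (i : ℕ) := Equiv.sum_comp σ (fun i : Fin n => (i : ℕ))
            _ = K := by rw [hK]; exact Fin.sum_univ_eq_sum_range (fun i => i) n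
    have hQev3 : Q.eval 1 = ∑ σ : Equiv.Perm (Fin n),
        (∏ i, ((a i:ℕ):ℤ) ^ ((σ i : ℕ))) * WD (jmap σ) := by
      rw [hQev2, himg, Finset.sum_image (fun x _ y _ h => hjinj h)]
      rfl
    set Cmat : Matrix (Fin n) (Fin n) ℤ :=
      Matrix.of fun i j : Fin n => (((b j:ℕ).choose (i:ℕ) : ℤ)) with hCmat
    have hWDσ : ∀ σ : Equiv.Perm (Fin n),
        WD (jmap σ) = (Equiv.Perm.sign σ : ℤ) * Cmat.det := by
      intro σ
      have hsub : (Matrix.of fun i j : Fin n => (((b j:ℕ).choose ((jmap σ i : ℕ)) : ℤ)))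
          = Cmat.submatrix σ id := rfl
      rw [hWD]
      show (Matrix.of fun i j : Fin n => (((b j:ℕ).choose ((jmap σ i : ℕ)) : ℤ))).det = _
      rw [hsub, Matrix.det_permute]
      norm_cast
    have hQev4 : Q.eval 1 = Cmat.det * ∑ σ : Equiv.Perm (Fin n),
        (Equiv.Perm.sign σ : ℤ) * ∏ i, ((a i:ℕ):ℤ) ^ ((σ i : ℕ)) := by
      rw [hQev3, Finset.mul_sum]
      refine Finset.sum_congr rfl fun σ _ => ?_
      rw [hWDσ σ]
      ring
    -- the sign sum is a Vandermonde determinant, in any commutative ring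
    have hsign : ∀ (R : Type) (_ : CommRing R) (x : Fin n → R),
        (Matrix.vandermonde x).det
          = ∑ σ : Equiv.Perm (Fin n), (Equiv.Perm.sign σ : ℤ) * ∏ i, x i ^ ((σ i : ℕ)) := by
      intro R _ x
      rw [← Matrix.det_transpose, Matrix.det_apply]
      refine Finset.sum_congr rfl fun σ _ => ?_
      rw [Units.smul_def, zsmul_eq_mul]
      congr 1
    -- cast a vandermonde determinant into ZMod p
    have hcastvdm : ∀ (v : Fin n → ℕ),
        (((Matrix.vandermonde fun i => ((v i : ℕ) : ℤ)).det : ℤ) : ZMod p)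
        = (Matrix.vandermonde fun i => ((v i : ℕ) : ZMod p)).det := by
      intro v
      rw [show (((Matrix.vandermonde fun i => ((v i : ℕ) : ℤ)).det : ℤ) : ZMod p)
          = ((Int.castRingHom (ZMod p)).mapMatrix
              (Matrix.vandermonde fun i => ((v i : ℕ) : ℤ))).det
        from RingHom.map_det (Int.castRingHom (ZMod p)) (Matrix.vandermonde fun i => ((v i : ℕ) : ℤ))]
      congr 1
      funext i j
      simp [Matrix.vandermonde]
    -- injectivity of node casts
    have hnodes : ∀ (c : Fin n → Fin p), Function.Injective c →
        Function.Injective (fun i => (((c i : ℕ)) : ZMod p)) := by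
      intro c hc x y hxy
      apply hc
      apply Fin.ext
      have h1 := congrArg ZMod.val hxy
      rwa [ZMod.val_cast_of_lt (c x).2, ZMod.val_cast_of_lt (c y).2] at h1
    have hvdma : (Matrix.vandermonde fun i : Fin n => ((a i : ℕ) : ZMod p)).det ≠ 0 :=
      Matrix.det_vandermonde_ne_zero_iff.mpr (hnodes a ha)
    have hvdmb : (Matrix.vandermonde fun i : Fin n => ((b i : ℕ) : ZMod p)).det ≠ 0 :=
      Matrix.det_vandermonde_ne_zero_iff.mpr (hnodes b hb)
    -- factorial identity for the binomial matrix
    have hfacid : (Matrix.vandermonde fun i : Fin n => ((b i : ℕ) : ℤ)).det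
        = (∏ i : Fin n, ((i:ℕ).factorial : ℤ)) * Cmat.det := by
      rw [Matrix.det_eval_matrixOfPolynomials_eq_det_vandermonde
        (fun i : Fin n => ((b i : ℕ) : ℤ)) (fun i => descPochhammer ℤ (i:ℕ))
        (fun i => descPochhammer_natDegree ℤ (i:ℕ)) (fun i => monic_descPochhammer ℤ (i:ℕ))]
      have hentry : (Matrix.of fun i j : Fin n => (descPochhammer ℤ (j:ℕ)).eval ((b i:ℕ):ℤ))
          = Matrix.of fun i j : Fin n =>
              (((j:ℕ).factorial : ℤ)) * (((b i:ℕ).choose (j:ℕ) : ℤ)) := by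
        funext i j
        rw [Matrix.of_apply, descPochhammer_eval_eq_descFactorial ℤ _ _, Matrix.of_apply]
        rw [Nat.descFactorial_eq_factorial_mul_choose]
        push_cast
        ring
      rw [hentry]
      refine (Matrix.det_mul_row (fun j : Fin n => (((j:ℕ).factorial : ℤ)))
        (Matrix.of fun i j : Fin n => (((b i:ℕ).choose (j:ℕ) : ℤ)))).trans ?_
      congr 1
      rw [← Matrix.det_transpose]
      congr 1
    have hCmatne : ((Cmat.det : ℤ) : ZMod p) ≠ 0 := by
      intro h0
      apply hvdmb
      have h1 := hcastvdm (fun i => (b i : ℕ))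
      rw [← h1, hfacid]
      push_cast
      push_cast at h0
      rw [h0, mul_zero]
    have hvsum : ((∑ σ : Equiv.Perm (Fin n),
        (Equiv.Perm.sign σ : ℤ) * ∏ i, ((a i:ℕ):ℤ) ^ ((σ i : ℕ)) : ℤ) : ZMod p)
        = (Matrix.vandermonde fun i : Fin n => ((a i : ℕ) : ZMod p)).det := by
      rw [hsign (ZMod p) inferInstance (fun i => ((a i : ℕ) : ZMod p))]
      push_cast
      rfl
    rw [hQev4, Int.cast_mul, hvsum]
    exact mul_ne_zero hCmatne hvdma
  -- conclude
  intro hdet0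
  have hev : Polynomial.aeval ζ Mp.det = (0 : ℂ) := by
    have hmap : ((Polynomial.aeval ζ : ℤ[X] →ₐ[ℤ] ℂ) : ℤ[X] →+* ℂ).mapMatrix Mp
        = Matrix.of fun i j : Fin n => ζ ^ ((a i : ℕ) * (b j : ℕ)) := by
      funext i j
      simp [hMp]
    have h3 : (Polynomial.aeval ζ) Mp.det
        = (((Polynomial.aeval ζ : ℤ[X] →ₐ[ℤ] ℂ) : ℤ[X] →+* ℂ).mapMatrix Mp).det :=
      RingHom.map_det _ _
    rw [h3, hmap]
    exact hdet0
  have hQζ : Polynomial.aeval ζ Q = 0 := by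
    have := hfact ▸ hev
    rw [map_mul, map_pow] at this
    have hζ1 : (Polynomial.aeval ζ lam : ℂ) ≠ 0 := by
      have : ζ ≠ 1 := hζ.ne_one hp.one_lt
      simp [hlam, sub_ne_zero.mpr this]
    rcases mul_eq_zero.mp this with h | h
    · exact absurd (pow_eq_zero_iff'.mp h).1 hζ1
    · exact h
  have hdvd : (p : ℤ) ∣ Q.eval 1 := by
    have hmin : minpoly ℤ ζ ∣ Q :=
      minpoly.isIntegrallyClosed_dvd (hζ.isIntegral hp.pos) hQζ
    rw [← Polynomial.cyclotomic_eq_minpoly hζ hp.pos] at hmin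
    obtain ⟨R, hR⟩ := hmin
    rw [hR, Polynomial.eval_mul, Polynomial.eval_one_cyclotomic_prime]
    exact Dvd.intro _ rfl
  exact hQ1 (by rwa [ZMod.intCast_zmod_eq_zero_iff_dvd])

end Aux

/-- Complete incompatibility of the standard and Fourier bases for prime d:
if `|S| + |T| ≤ d` then the only vector with standard-basis support in `S` and
Fourier support in `T` is zero. -/
theorem prime_dft_complete_incompatibility (d : ℕ) (hd : 2 ≤ d) (hp : d.Prime)
    (S T : Finset (Fin d)) (hST : S.card + T.card ≤ d)
    (ψ : Fin d → ℂ)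
    (hA : ∀ i : Fin d, i ∉ S → ψ i = 0)
    (hB : ∀ j : Fin d, j ∉ T → dftCoeff d ψ j = 0) :
    ψ = 0 := by
  have hd0 : (d : ℕ) ≠ 0 := by omega
  have hω : IsPrimitiveRoot (dftOmega d) d := by
    rw [dftOmega]
    exact Complex.isPrimitiveRoot_exp d hd0
  set ζ : ℂ := (dftOmega d)⁻¹ with hζdef
  have hζ : IsPrimitiveRoot ζ d := hω.inv
  have hconj : (starRingEnd ℂ) (dftOmega d) = ζ := by
    rw [hζdef, dftOmega, ← Complex.exp_conj, ← Complex.exp_neg]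
    congr 1
    simp only [map_div₀, map_mul, Complex.conj_I, Complex.conj_ofReal, map_ofNat,
      Complex.conj_natCast]
    ring
  have hsq : ((Real.sqrt d : ℝ) : ℂ) ≠ 0 := by
    rw [Complex.ofReal_ne_zero, Real.sqrt_ne_zero']
    positivity
  have hkey : ∀ j : Fin d, j ∉ T → ∑ i ∈ S, ζ ^ ((i : ℕ) * (j : ℕ)) * ψ i = 0 := by
    intro j hj
    have h0 := hB j hj
    rw [dftCoeff] at h0
    have h1 : ∀ i : Fin d, (starRingEnd ℂ) (fourierVec d j i) * ψ i
        = ζ ^ ((i : ℕ) * (j : ℕ)) * ψ i / (Real.sqrt d : ℂ) := by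
      intro i
      rw [fourierVec]
      simp only [map_div₀, map_pow, hconj, Complex.conj_ofReal]
      ring
    rw [Finset.sum_congr rfl (fun i _ => h1 i), ← Finset.sum_div] at h0
    have h2 : ∑ i : Fin d, ζ ^ ((i : ℕ) * (j : ℕ)) * ψ i = 0 :=
      (div_eq_zero_iff.mp h0).resolve_right hsq
    rw [← Finset.sum_subset (Finset.subset_univ S)
      (fun i _ hi => by rw [hA i hi, mul_zero])] at h2
    exact h2
  have hsle : S.card ≤ Tᶜ.card := by
    rw [Finset.card_compl, Fintype.card_fin]
    omega
  obtain ⟨B, hBsub, hBcard⟩ := Finset.exists_subset_card_eq hsle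
  set eS := S.equivFin with heS
  set eB := B.equivFin with heB
  set a : Fin S.card → Fin d := fun i => (eS.symm i : Fin d) with ha
  set b : Fin S.card → Fin d := fun j => ((eB.symm (finCongr hBcard.symm j)) : Fin d) with hbdef
  have hainj : Function.Injective a := by
    intro x y h
    have := Subtype.coe_injective h
    exact (Equiv.injective eS.symm) this
  have hbinj : Function.Injective b := by
    intro x y h
    have h2 := Subtype.coe_injective h
    have h3 := (Equiv.injective eB.symm) h2
    exact (finCongr hBcard.symm).injective h3
  have hcheb := chebotarev hp hζ b a hbinj hainj
  set M : Matrix (Fin S.card) (Fin S.card) ℂ :=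
    Matrix.of fun i j : Fin S.card => ζ ^ ((b i : ℕ) * (a j : ℕ)) with hM
  set v : Fin S.card → ℂ := fun j => ψ (a j) with hv
  have hMv : M.mulVec v = 0 := by
    funext i
    have hbiB : (b i : Fin d) ∈ B := (eB.symm (finCongr hBcard.symm i)).2
    have hbiT : (b i : Fin d) ∉ T := by
      have := hBsub hbiB
      simpa using this
    have hk := hkey (b i) hbiT
    have hsum : ∑ x ∈ S, ζ ^ ((x : ℕ) * ((b i : Fin d) : ℕ)) * ψ x
        = ∑ j : Fin S.card, ζ ^ ((b i : ℕ) * (a j : ℕ)) * ψ (a j) := by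
      rw [← Finset.sum_coe_sort S]
      rw [← Equiv.sum_comp eS.symm
        (fun x : {x // x ∈ S} => ζ ^ ((x : ℕ) * ((b i : Fin d) : ℕ)) * ψ x)]
      refine Finset.sum_congr rfl fun j _ => ?_
      rw [mul_comm ((a j : ℕ)) ((b i : ℕ))]
    rw [hsum] at hk
    simpa [Matrix.mulVec, dotProduct, hM, hv] using hk
  have hv0 : v = 0 := by
    by_contra hvne
    exact hcheb (Matrix.exists_mulVec_eq_zero_iff.mp ⟨v, hvne, hMv⟩)
  funext x
  by_cases hx : x ∈ S
  · have hax : a (eS ⟨x, hx⟩) = x := by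
      rw [ha]
      simp
    have := congrFun hv0 (eS ⟨x, hx⟩)
    rw [hv] at this
    simp only [Pi.zero_apply] at this ⊢
    rw [← hax]
    exact this
  · exact hA x hx
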